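/- Let H be a complex Hilbert space and let T be a densely defined self-adjoint unbounded operator on H (T equals its adjoint as a LinearPMap). Assume that for every μ > 0 there is a bounded operator B_μ on H with ‖B_μ‖ ≤ 1/μ such that B_μ x lies in the domain of T and T(B_μ x) − iμ·B_μ x = x for all x ∈ H, and B_μ(Tψ − iμψ) = ψ for all ψ in the domain of T. Let R be a symmetric unbounded operator on H whose domain contains the domain of T, and assume there is a compact bounded operator K on H with K x = R(B₁ x) for all x ∈ H. Then the sum T + R (the LinearPMap with domain dom T ⊓ dom R = dom T, sending ψ ↦ Tψ + Rψ) is self-adjoint: (T + R).adjoint = T + R. -/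

import Mathlib

open scoped InnerProductSpace

private lemma aux_small {H : Type*} [NormedAddCommGroup H] [InnerProductSpace ℂ H]
    (G : H →L[ℂ] H) (hG : IsCompactOperator (⇑G))
    (D : Set H) (hD : Dense D)
    (E : ℝ → H →L[ℂ] H)
    (hE : ∀ μ : ℝ, 1 ≤ μ → ‖E μ‖ ≤ 3)
    (hpt : ∀ z ∈ D, ∃ c : ℝ, 0 ≤ c ∧ ∀ μ : ℝ, 1 ≤ μ → ‖E μ z‖ ≤ c / μ)
    (δ : ℝ) (hδ : 0 < δ) :
    ∃ μ₀ : ℝ, 1 ≤ μ₀ ∧ ∀ μ : ℝ, μ₀ ≤ μ → ∀ x : H, ‖E μ (G x)‖ ≤ δ * ‖x‖ := by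
  classical
  obtain ⟨M, hMcomp, hM⟩ := hG.image_closedBall_subset_compact (𝕜₁ := ℂ)
      (f := (G : H →ₗ[ℂ] H)) 1
  have hε : (0:ℝ) < δ / 8 := by linarith
  obtain ⟨t, htfin, hcover⟩ := Metric.totallyBounded_iff.mp hMcomp.totallyBounded (δ/8) hε
  have hz : ∀ y : H, ∃ z ∈ D, dist y z < δ/8 := fun y =>
    Metric.mem_closure_iff.mp (hD y) _ hε
  choose z hzD hzd using hz
  choose c hc0 hcb using fun y : H => hpt (z y) (hzD y)
  set S : ℝ := ∑ y ∈ htfin.toFinset, c y with hS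
  have hS0 : 0 ≤ S := Finset.sum_nonneg fun y _ => hc0 y
  have h8S : 0 ≤ 8 * S / δ := by positivity
  refine ⟨1 + 8 * S / δ, by linarith, fun μ hμ x => ?_⟩
  have hμ1 : (1:ℝ) ≤ μ := le_trans (by linarith) hμ
  have hμ0 : (0:ℝ) < μ := lt_of_lt_of_le one_pos hμ1
  rcases eq_or_ne x 0 with rfl | hx
  · simp
  · have hxn : (0:ℝ) < ‖x‖ := norm_pos_iff.mpr hx
    set u : H := ((‖x‖ : ℂ))⁻¹ • x with hu
    have hun : ‖u‖ = 1 := by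
      rw [hu, norm_smul, norm_inv, Complex.norm_real, Real.norm_eq_abs,
        abs_of_pos hxn, inv_mul_cancel₀ hxn.ne']
    have hGu : G u ∈ M := hM ⟨u, by simpa [Metric.mem_closedBall, dist_zero_right] using hun.le, rfl⟩
    obtain ⟨y, hyt, hyb⟩ := Set.mem_iUnion₂.mp (hcover hGu)
    have hyb' : ‖G u - y‖ < δ/8 := by
      rwa [Metric.mem_ball, dist_eq_norm] at hyb
    have hyz : ‖y - z y‖ < δ/8 := by
      have := hzd y; rwa [dist_eq_norm] at this
    have hmu3 : ‖E μ‖ ≤ 3 := hE μ hμ1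
    have hczμ : c y / μ ≤ δ / 8 := by
      have hcyS : c y ≤ S := Finset.single_le_sum (f := c) (fun i _ => hc0 i)
        (htfin.mem_toFinset.mpr hyt)
      have h8 : True := trivial
      have hco : 8 * c y ≤ μ * δ := by
        have hm := mul_le_mul_of_nonneg_right hμ hδ.le
        have hd : (8*S/δ)*δ = 8*S := div_mul_cancel₀ _ hδ.ne'
        nlinarith
      rw [div_le_iff₀ hμ0]
      linarith
    have hEu : ‖E μ (G u)‖ ≤ δ := by
      have hdecomp : G u = (G u - y) + (y - z y) + z y := by abel
      calc ‖E μ (G u)‖ = ‖E μ (G u - y) + E μ (y - z y) + E μ (z y)‖ := by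
            rw [← map_add, ← map_add, ← hdecomp]
        _ ≤ ‖E μ (G u - y)‖ + ‖E μ (y - z y)‖ + ‖E μ (z y)‖ := by
            exact (norm_add_le _ _).trans (by gcongr; exact norm_add_le _ _)
        _ ≤ 3 * (δ/8) + 3 * (δ/8) + c y / μ := by
            have b1 : ‖E μ (G u - y)‖ ≤ 3 * (δ/8) := by
              have h := (E μ).le_opNorm (G u - y)
              nlinarith [norm_nonneg (G u - y), (E μ).opNorm_nonneg]
            have b2 : ‖E μ (y - z y)‖ ≤ 3 * (δ/8) := by
              have h := (E μ).le_opNorm (y - z y)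
              nlinarith [norm_nonneg (y - z y), (E μ).opNorm_nonneg]
            have b3 := hcb y μ hμ1
            linarith
        _ ≤ 3 * (δ/8) + 3 * (δ/8) + δ/8 := by linarith
        _ ≤ δ := by linarith
    have hxu : x = (‖x‖ : ℂ) • u := by
      rw [hu, smul_smul, mul_inv_cancel₀ (by exact_mod_cast hxn.ne'), one_smul]
    calc ‖E μ (G x)‖ = ‖x‖ * ‖E μ (G u)‖ := by
          conv_lhs => rw [hxu]
          rw [map_smul, map_smul, norm_smul, Complex.norm_real, Real.norm_eq_abs,
            abs_of_pos hxn]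
      _ ≤ ‖x‖ * δ := by exact mul_le_mul_of_nonneg_left hEu hxn.le
      _ = δ * ‖x‖ := mul_comm _ _


private lemma aux_crit {H : Type*} [NormedAddCommGroup H] [InnerProductSpace ℂ H] [CompleteSpace H]
    (S : H →ₗ.[ℂ] H) (hdense : Dense (S.domain : Set H))
    (hsymm : ∀ ψ φ : S.domain, ⟪S ψ, (φ : H)⟫_ℂ = ⟪(ψ : H), S φ⟫_ℂ)
    (μ : ℝ) (hμ : 0 < μ)
    (hm : ∀ x : H, ∃ ψ : S.domain, S ψ - (Complex.I * μ) • (ψ : H) = x)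
    (hp : ∀ x : H, ∃ ψ : S.domain, S ψ + (Complex.I * μ) • (ψ : H) = x) :
    S.adjoint = S := by
  have hfa : S.adjoint.IsFormalAdjoint S := LinearPMap.adjoint_isFormalAdjoint hdense
  have hSle : S ≤ S.adjoint :=
    LinearPMap.IsFormalAdjoint.le_adjoint hdense (show S.IsFormalAdjoint S from hsymm)
  have key : ∀ y : S.adjoint.domain, ∃ ψ : S.domain, (y : H) = (ψ : H) ∧ S.adjoint y = S ψ := by
    intro y
    obtain ⟨ψ, hψ⟩ := hp (S.adjoint y + (Complex.I * μ) • (y : H))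
    have horth : ∀ x : H, ⟪x, (y : H) - (ψ : H)⟫_ℂ = 0 := by
      intro x
      obtain ⟨φ, hφ⟩ := hm x
      rw [← hφ]
      have e1 : ⟪S φ, (y : H)⟫_ℂ = ⟪(φ : H), S.adjoint y⟫_ℂ := by
        rw [← inner_conj_symm, ← hfa y φ, inner_conj_symm]
      have e2 : ⟪S φ, (ψ : H)⟫_ℂ = ⟪(φ : H), S ψ⟫_ℂ := hsymm φ ψ
      have e3 := congrArg (fun v => ⟪(φ : H), v⟫_ℂ) hψ
      simp only [inner_add_right, inner_smul_right] at e3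
      simp only [inner_sub_left, inner_sub_right, inner_smul_left, e1, e2, map_mul,
        Complex.conj_I, Complex.conj_ofReal]
      ring_nf
      ring_nf at e3
      linear_combination -e3
    have hyψ : (y : H) = (ψ : H) := by
      have h0 := horth ((y : H) - (ψ : H))
      rw [inner_self_eq_zero, sub_eq_zero] at h0
      exact h0
    refine ⟨ψ, hyψ, ?_⟩
    rw [← hyψ] at hψ
    have := add_right_cancel hψ
    exact this.symm
  have hle : S.adjoint ≤ S := by
    refine ⟨fun a ha => ?_, fun a b hab => ?_⟩
    · obtain ⟨ψ, h1, _⟩ := key ⟨a, ha⟩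
      simpa [← h1] using ψ.2
    · obtain ⟨ψ, h1, h2⟩ := key a
      rw [h2]
      have hbψ : b = ψ := Subtype.ext (hab.symm.trans h1)
      rw [hbψ]
  exact le_antisymm hle hSle


set_option maxHeartbeats 1000000 in
/-- **Proposition A.7 (Hilbert-space case).** Let `T` be a densely defined self-adjoint operator
on a complex Hilbert space, admitting resolvents `B μ = (T − iμ)⁻¹` with `‖B μ‖ ≤ 1/μ` for all
`μ > 0`.  Let `R` be a symmetric operator with `dom T ⊆ dom R` such that `R (T − i)⁻¹` is compact.
Then `T + R` is self-adjoint. -/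
theorem selfAdjoint_add_relatively_compact_symmetric
    {H : Type*} [NormedAddCommGroup H] [InnerProductSpace ℂ H] [CompleteSpace H]
    (T R : H →ₗ.[ℂ] H)
    (hdense : Dense (T.domain : Set H))
    (hTsa : T.adjoint = T)
    (B : ℝ → H →L[ℂ] H)
    (hBnorm : ∀ μ : ℝ, 0 < μ → ‖B μ‖ ≤ 1 / μ)
    (hBmem : ∀ μ : ℝ, 0 < μ → ∀ x : H, B μ x ∈ T.domain)
    (hBright : ∀ (μ : ℝ) (hμ : 0 < μ) (x : H),
      T ⟨B μ x, hBmem μ hμ x⟩ - (Complex.I * (μ : ℂ)) • B μ x = x)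
    (hBleft : ∀ (μ : ℝ), 0 < μ → ∀ ψ : T.domain,
      B μ (T ψ - (Complex.I * (μ : ℂ)) • (ψ : H)) = (ψ : H))
    (hRsymm : ∀ ψ φ : R.domain, ⟪R ψ, (φ : H)⟫_ℂ = ⟪(ψ : H), R φ⟫_ℂ)
    (hdom : T.domain ≤ R.domain)
    (K : H →L[ℂ] H) (hK : IsCompactOperator K)
    (hKR : ∀ x : H, K x = R ⟨B 1 x, hdom (hBmem 1 one_pos x)⟩) :
    (T + R).adjoint = T + R := by
  classical
  have hfaT : T.IsFormalAdjoint T := by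
    have h := LinearPMap.adjoint_isFormalAdjoint hdense
    rwa [hTsa] at h
  have hTsymm : ∀ ψ φ : T.domain, ⟪T ψ, (φ : H)⟫_ℂ = ⟪(ψ : H), T φ⟫_ℂ := hfaT
  have hTle : T.adjoint ≤ T := le_of_eq hTsa
  set Bs : ℝ → H →L[ℂ] H := fun ν => ContinuousLinearMap.adjoint (B ν) with hBsdef
  have hBsnorm : ∀ ν : ℝ, 0 < ν → ‖Bs ν‖ ≤ 1 / ν := by
    intro ν hν
    have := ContinuousLinearMap.adjoint.norm_map (B ν)
    simp only [hBsdef]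
    rw [this]
    exact hBnorm ν hν
  have hBright' : ∀ (ν : ℝ) (hν : 0 < ν) (x : H),
      T ⟨B ν x, hBmem ν hν x⟩ = x + (Complex.I * ν) • B ν x := by
    intro ν hν x
    exact sub_eq_iff_eq_add.mp (hBright ν hν x)
  have hBleft' : ∀ (ν : ℝ), 0 < ν → ∀ ψ : T.domain,
      B ν (T ψ) = (ψ : H) + (Complex.I * ν) • B ν (ψ : H) := by
    intro ν hν ψ
    have h := hBleft ν hν ψ
    rw [map_sub, map_smul] at h
    exact sub_eq_iff_eq_add.mp h
  have hBsleft : ∀ (ν : ℝ), 0 < ν → ∀ z : T.domain,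
      Bs ν (T z + (Complex.I * ν) • (z : H)) = (z : H) := by
    intro ν hν z
    refine ext_inner_right ℂ fun w => ?_
    simp only [hBsdef]
    rw [ContinuousLinearMap.adjoint_inner_left, inner_add_left, inner_smul_left,
      hTsymm z ⟨B ν w, hBmem ν hν w⟩, hBright' ν hν w]
    simp only [inner_add_right, inner_smul_right, map_mul, Complex.conj_I, Complex.conj_ofReal]
    ring
  have hBskey : ∀ (ν : ℝ) (hν : 0 < ν) (x : H) (φ : T.domain),
      ⟪x - (Complex.I * ν) • Bs ν x, (φ : H)⟫_ℂ = ⟪Bs ν x, T φ⟫_ℂ := by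
    intro ν hν x φ
    simp only [hBsdef]
    rw [ContinuousLinearMap.adjoint_inner_left, hBleft' ν hν φ]
    simp only [inner_sub_left, inner_smul_left, inner_add_right, inner_smul_right,
      ContinuousLinearMap.adjoint_inner_left, map_mul, Complex.conj_I, Complex.conj_ofReal]
    ring
  have hBsmemadj : ∀ (ν : ℝ) (hν : 0 < ν) (x : H), Bs ν x ∈ T.adjoint.domain := by
    intro ν hν x
    exact LinearPMap.mem_adjoint_domain_of_exists _
      ⟨x - (Complex.I * ν) • Bs ν x, fun φ => hBskey ν hν x φ⟩
  have hBsmem : ∀ (ν : ℝ), 0 < ν → ∀ x : H, Bs ν x ∈ T.domain :=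
    fun ν hν x => hTle.1 (hBsmemadj ν hν x)
  have hBsval : ∀ (ν : ℝ) (hν : 0 < ν) (x : H),
      T ⟨Bs ν x, hBsmem ν hν x⟩ = x - (Complex.I * ν) • Bs ν x := by
    intro ν hν x
    have h2 : T.adjoint ⟨Bs ν x, hBsmemadj ν hν x⟩ = x - (Complex.I * ν) • Bs ν x :=
      LinearPMap.adjoint_apply_eq hdense _ (fun φ => hBskey ν hν x φ)
    have h3 : T.adjoint ⟨Bs ν x, hBsmemadj ν hν x⟩ = T ⟨Bs ν x, hBsmem ν hν x⟩ :=
      hTle.2 rfl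
    rw [← h3, h2]
  set Cop : ℝ → H →L[ℂ] H := fun ν => 1 + (Complex.I * ((ν : ℂ) - 1)) • B ν with hCop
  set Dop : ℝ → H →L[ℂ] H := fun ν => 1 - (Complex.I * ((ν : ℂ) + 1)) • Bs ν with hDop
  have hCopApply : ∀ (ν : ℝ) (x : H), Cop ν x = x + (Complex.I * ((ν : ℂ) - 1)) • B ν x := by
    intro ν x
    simp [hCop]
  have hDopApply : ∀ (ν : ℝ) (x : H), Dop ν x = x - (Complex.I * ((ν : ℂ) + 1)) • Bs ν x := by
    intro ν x
    simp [hDop]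
  have hF1 : ∀ (ν : ℝ) (hν : 0 < ν) (x : H), B 1 (Cop ν x) = B ν x := by
    intro ν hν x
    have h := hBleft 1 one_pos ⟨B ν x, hBmem ν hν x⟩
    rw [hBright' ν hν x] at h
    have harg : (x + (Complex.I * ν) • B ν x) - (Complex.I * ((1:ℝ) : ℂ)) • B ν x = Cop ν x := by
      rw [hCopApply]
      push_cast
      module
    rwa [harg] at h
  have hF2 : ∀ (ν : ℝ) (hν : 0 < ν) (x : H), B 1 (Dop ν x) = Bs ν x := by
    intro ν hν x
    have h := hBleft 1 one_pos ⟨Bs ν x, hBsmem ν hν x⟩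
    rw [hBsval ν hν x] at h
    have harg : (x - (Complex.I * ν) • Bs ν x) - (Complex.I * ((1:ℝ) : ℂ)) • Bs ν x = Dop ν x := by
      rw [hDopApply]
      push_cast
      module
    rwa [harg] at h
  have hF3 : ∀ (ν : ℝ) (hν : 0 < ν) (x : H) (hmem : B ν x ∈ R.domain),
      R ⟨B ν x, hmem⟩ = K (Cop ν x) := by
    intro ν hν x hmem
    rw [hKR (Cop ν x)]
    congr 1
    exact Subtype.ext (hF1 ν hν x).symm
  have hF4 : ∀ (ν : ℝ) (hν : 0 < ν) (x : H) (hmem : Bs ν x ∈ R.domain),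
      R ⟨Bs ν x, hmem⟩ = K (Dop ν x) := by
    intro ν hν x hmem
    rw [hKR (Dop ν x)]
    congr 1
    exact Subtype.ext (hF2 ν hν x).symm
  have hadj1 : ContinuousLinearMap.adjoint (1 : H →L[ℂ] H) = 1 := by
    rw [← ContinuousLinearMap.star_eq_adjoint, star_one]
  have hCopAdj : ∀ ν : ℝ, ContinuousLinearMap.adjoint (Cop ν)
      = 1 - (Complex.I * ((ν : ℂ) - 1)) • Bs ν := by
    intro ν
    simp only [hCop, hBsdef]
    rw [map_add, map_smulₛₗ, hadj1]
    have hc : (starRingEnd ℂ) (Complex.I * ((ν : ℂ) - 1)) = -(Complex.I * ((ν : ℂ) - 1)) := by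
      rw [map_mul, map_sub, Complex.conj_I, Complex.conj_ofReal, map_one]
      ring
    rw [hc, neg_smul, ← sub_eq_add_neg]
  have hDopAdj : ∀ ν : ℝ, ContinuousLinearMap.adjoint (Dop ν)
      = 1 + (Complex.I * ((ν : ℂ) + 1)) • B ν := by
    intro ν
    simp only [hDop, hBsdef]
    rw [map_sub, map_smulₛₗ, hadj1, ContinuousLinearMap.adjoint_adjoint]
    have hc : (starRingEnd ℂ) (Complex.I * ((ν : ℂ) + 1)) = -(Complex.I * ((ν : ℂ) + 1)) := by
      rw [map_mul, map_add, Complex.conj_I, Complex.conj_ofReal, map_one]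
      ring
    rw [hc, neg_smul, sub_neg_eq_add]
  have hCptw : ∀ (ν : ℝ) (hν : 0 < ν) (z : T.domain),
      ‖ContinuousLinearMap.adjoint (Cop ν) (z : H)‖ ≤ ‖T z + Complex.I • (z : H)‖ / ν := by
    intro ν hν z
    have h1 : ContinuousLinearMap.adjoint (Cop ν) (z : H)
        = Bs ν (T z + Complex.I • (z : H)) := by
      rw [hCopAdj]
      have h3 : T z + Complex.I • (z : H)
          = (T z + (Complex.I * ν) • (z : H)) + (Complex.I * (1 - (ν : ℂ))) • (z : H) := by
        module
      rw [h3, map_add, hBsleft ν hν z, map_smul]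
      simp only [ContinuousLinearMap.sub_apply, ContinuousLinearMap.smul_apply,
        ContinuousLinearMap.one_apply]
      module
    rw [h1]
    have h4 := mul_le_mul_of_nonneg_right (hBsnorm ν hν)
      (norm_nonneg (T z + Complex.I • (z : H)))
    calc ‖Bs ν (T z + Complex.I • (z : H))‖
        ≤ ‖Bs ν‖ * ‖T z + Complex.I • (z : H)‖ := (Bs ν).le_opNorm _
      _ ≤ (1 / ν) * ‖T z + Complex.I • (z : H)‖ := h4
      _ = ‖T z + Complex.I • (z : H)‖ / ν := by ring
  have hDptw : ∀ (ν : ℝ) (hν : 0 < ν) (z : T.domain),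
      ‖ContinuousLinearMap.adjoint (Dop ν) (z : H)‖ ≤ ‖T z + Complex.I • (z : H)‖ / ν := by
    intro ν hν z
    have h1 : ContinuousLinearMap.adjoint (Dop ν) (z : H)
        = B ν (T z + Complex.I • (z : H)) := by
      rw [hDopAdj]
      have h3 : T z + Complex.I • (z : H)
          = (T z - (Complex.I * ν) • (z : H)) + (Complex.I * ((ν : ℂ) + 1)) • (z : H) := by
        module
      rw [h3, map_add, hBleft ν hν z, map_smul]
      simp only [ContinuousLinearMap.add_apply, ContinuousLinearMap.smul_apply,
        ContinuousLinearMap.one_apply]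
    rw [h1]
    have h4 := mul_le_mul_of_nonneg_right (hBnorm ν hν)
      (norm_nonneg (T z + Complex.I • (z : H)))
    calc ‖B ν (T z + Complex.I • (z : H))‖
        ≤ ‖B ν‖ * ‖T z + Complex.I • (z : H)‖ := (B ν).le_opNorm _
      _ ≤ (1 / ν) * ‖T z + Complex.I • (z : H)‖ := h4
      _ = ‖T z + Complex.I • (z : H)‖ / ν := by ring
  have hone : ‖(1 : H →L[ℂ] H)‖ ≤ 1 := by
    rw [ContinuousLinearMap.one_def]
    exact ContinuousLinearMap.norm_id_le
  have hnc1 : ∀ ν : ℝ, 1 ≤ ν → ‖Complex.I * ((ν : ℂ) - 1)‖ = ν - 1 := by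
    intro ν hν
    rw [norm_mul, Complex.norm_I, one_mul]
    have h : ((ν : ℂ) - 1) = (((ν - 1 : ℝ)) : ℂ) := by push_cast; ring
    rw [h, Complex.norm_real, Real.norm_eq_abs, abs_of_nonneg (by linarith)]
  have hnc2 : ∀ ν : ℝ, 1 ≤ ν → ‖Complex.I * ((ν : ℂ) + 1)‖ = ν + 1 := by
    intro ν hν
    rw [norm_mul, Complex.norm_I, one_mul]
    have h : ((ν : ℂ) + 1) = (((ν + 1 : ℝ)) : ℂ) := by push_cast; ring
    rw [h, Complex.norm_real, Real.norm_eq_abs, abs_of_nonneg (by linarith)]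
  have hCopnorm : ∀ ν : ℝ, 1 ≤ ν → ‖Cop ν‖ ≤ 3 := by
    intro ν hν
    have hν0 : (0:ℝ) < ν := by linarith
    have hsm : ‖(Complex.I * ((ν : ℂ) - 1)) • B ν‖ ≤ 2 := by
      rw [norm_smul, hnc1 ν hν]
      have h3 := hBnorm ν hν0
      have h5 : (ν - 1) * (1 / ν) ≤ 1 := by
        rw [mul_one_div, div_le_one hν0]; linarith
      nlinarith [norm_nonneg (B ν)]
    calc ‖Cop ν‖ ≤ ‖(1 : H →L[ℂ] H)‖ + ‖(Complex.I * ((ν : ℂ) - 1)) • B ν‖ := by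
          rw [hCop]; exact norm_add_le _ _
      _ ≤ 3 := by linarith
  have hDopnorm : ∀ ν : ℝ, 1 ≤ ν → ‖Dop ν‖ ≤ 3 := by
    intro ν hν
    have hν0 : (0:ℝ) < ν := by linarith
    have hsm : ‖(Complex.I * ((ν : ℂ) + 1)) • Bs ν‖ ≤ 2 := by
      rw [norm_smul, hnc2 ν hν]
      have h3 := hBsnorm ν hν0
      have h5 : (ν + 1) * (1 / ν) ≤ 2 := by
        rw [mul_one_div, div_le_iff₀ hν0]; linarith
      nlinarith [norm_nonneg (Bs ν)]
    calc ‖Dop ν‖ ≤ ‖(1 : H →L[ℂ] H)‖ + ‖(Complex.I * ((ν : ℂ) + 1)) • Bs ν‖ := by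
          rw [hDop]; exact norm_sub_le _ _
      _ ≤ 3 := by linarith
  have hCadjnorm : ∀ ν : ℝ, 1 ≤ ν → ‖ContinuousLinearMap.adjoint (Cop ν)‖ ≤ 3 := by
    intro ν hν
    rw [ContinuousLinearMap.adjoint.norm_map]
    exact hCopnorm ν hν
  have hDadjnorm : ∀ ν : ℝ, 1 ≤ ν → ‖ContinuousLinearMap.adjoint (Dop ν)‖ ≤ 3 := by
    intro ν hν
    rw [ContinuousLinearMap.adjoint.norm_map]
    exact hDopnorm ν hν
  set G : H →L[ℂ] H := (ContinuousLinearMap.adjoint K) ∘L K with hGdef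
  have hGc : IsCompactOperator (⇑G) := by
    have h := hK.continuous_comp (ContinuousLinearMap.adjoint K).continuous
    simpa only [hGdef, ContinuousLinearMap.coe_comp'] using h
  have hpt1 : ∀ z ∈ (T.domain : Set H), ∃ c : ℝ, 0 ≤ c ∧ ∀ ν : ℝ, 1 ≤ ν →
      ‖ContinuousLinearMap.adjoint (Cop ν) z‖ ≤ c / ν := by
    intro zz hz
    exact ⟨‖T ⟨zz, hz⟩ + Complex.I • zz‖, norm_nonneg _,
      fun ν hν => hCptw ν (by linarith) ⟨zz, hz⟩⟩
  have hpt2 : ∀ z ∈ (T.domain : Set H), ∃ c : ℝ, 0 ≤ c ∧ ∀ ν : ℝ, 1 ≤ ν →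
      ‖ContinuousLinearMap.adjoint (Dop ν) z‖ ≤ c / ν := by
    intro zz hz
    exact ⟨‖T ⟨zz, hz⟩ + Complex.I • zz‖, norm_nonneg _,
      fun ν hν => hDptw ν (by linarith) ⟨zz, hz⟩⟩
  obtain ⟨μ₁, hμ₁1, hsm1⟩ := aux_small G hGc (T.domain : Set H) hdense
    (fun ν => ContinuousLinearMap.adjoint (Cop ν)) hCadjnorm hpt1 (1/12) (by norm_num)
  obtain ⟨μ₂, hμ₂1, hsm2⟩ := aux_small G hGc (T.domain : Set H) hdense
    (fun ν => ContinuousLinearMap.adjoint (Dop ν)) hDadjnorm hpt2 (1/12) (by norm_num)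
  set μ : ℝ := max μ₁ μ₂ with hμdef
  have hμ1 : 1 ≤ μ := le_trans hμ₁1 (le_max_left _ _)
  have hμ0 : 0 < μ := lt_of_lt_of_le one_pos hμ1
  have hsm1' : ∀ x : H, ‖ContinuousLinearMap.adjoint (Cop μ) (G x)‖ ≤ (1/12) * ‖x‖ :=
    hsm1 μ (le_max_left _ _)
  have hsm2' : ∀ x : H, ‖ContinuousLinearMap.adjoint (Dop μ) (G x)‖ ≤ (1/12) * ‖x‖ :=
    hsm2 μ (le_max_right _ _)
  -- operator norm bounds < 1
  have hKCop : ‖K ∘L Cop μ‖ ≤ 1/2 := by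
    refine ContinuousLinearMap.opNorm_le_bound _ (by norm_num) fun x => ?_
    have hsq := ContinuousLinearMap.apply_norm_sq_eq_inner_adjoint_left (K ∘L Cop μ) x
    have hrw : ((ContinuousLinearMap.adjoint (K ∘L Cop μ)) ∘L (K ∘L Cop μ)) x
        = ContinuousLinearMap.adjoint (Cop μ) (G (Cop μ x)) := by
      rw [ContinuousLinearMap.adjoint_comp]
      rfl
    have hcs := re_inner_le_norm (𝕜 := ℂ)
      (ContinuousLinearMap.adjoint (Cop μ) (G (Cop μ x))) x
    have h5 : ‖ContinuousLinearMap.adjoint (Cop μ) (G (Cop μ x))‖ ≤ (1/12) * ‖Cop μ x‖ :=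
      hsm1' (Cop μ x)
    have h6 : ‖Cop μ x‖ ≤ 3 * ‖x‖ := ((Cop μ).le_opNorm x).trans
      (mul_le_mul_of_nonneg_right (hCopnorm μ hμ1) (norm_nonneg x))
    have h7 : ‖(K ∘L Cop μ) x‖^2 ≤ (1/2 * ‖x‖)^2 := by
      rw [hsq, hrw]
      nlinarith [norm_nonneg x, norm_nonneg (Cop μ x),
        norm_nonneg (ContinuousLinearMap.adjoint (Cop μ) (G (Cop μ x)))]
    exact le_of_pow_le_pow_left₀ (by norm_num : (2:ℕ) ≠ 0) (by positivity) h7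
  have hKDop : ‖K ∘L Dop μ‖ ≤ 1/2 := by
    refine ContinuousLinearMap.opNorm_le_bound _ (by norm_num) fun x => ?_
    have hsq := ContinuousLinearMap.apply_norm_sq_eq_inner_adjoint_left (K ∘L Dop μ) x
    have hrw : ((ContinuousLinearMap.adjoint (K ∘L Dop μ)) ∘L (K ∘L Dop μ)) x
        = ContinuousLinearMap.adjoint (Dop μ) (G (Dop μ x)) := by
      rw [ContinuousLinearMap.adjoint_comp]
      rfl
    have hcs := re_inner_le_norm (𝕜 := ℂ)
      (ContinuousLinearMap.adjoint (Dop μ) (G (Dop μ x))) x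
    have h5 : ‖ContinuousLinearMap.adjoint (Dop μ) (G (Dop μ x))‖ ≤ (1/12) * ‖Dop μ x‖ :=
      hsm2' (Dop μ x)
    have h6 : ‖Dop μ x‖ ≤ 3 * ‖x‖ := ((Dop μ).le_opNorm x).trans
      (mul_le_mul_of_nonneg_right (hDopnorm μ hμ1) (norm_nonneg x))
    have h7 : ‖(K ∘L Dop μ) x‖^2 ≤ (1/2 * ‖x‖)^2 := by
      rw [hsq, hrw]
      nlinarith [norm_nonneg x, norm_nonneg (Dop μ x),
        norm_nonneg (ContinuousLinearMap.adjoint (Dop μ) (G (Dop μ x)))]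
    exact le_of_pow_le_pow_left₀ (by norm_num : (2:ℕ) ≠ 0) (by positivity) h7
  -- Neumann series inverses
  have hu1 : ‖-(K ∘L Cop μ)‖ < 1 := by
    rw [norm_neg]
    linarith
  have hu2 : ‖-(K ∘L Dop μ)‖ < 1 := by
    rw [norm_neg]
    linarith
  set u₁ : (H →L[ℂ] H)ˣ := Units.oneSub (-(K ∘L Cop μ)) hu1 with hu₁def
  set u₂ : (H →L[ℂ] H)ˣ := Units.oneSub (-(K ∘L Dop μ)) hu2 with hu₂def
  have hu₁val : (u₁ : H →L[ℂ] H) = 1 + K ∘L Cop μ := by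
    rw [hu₁def]
    show (1 : H →L[ℂ] H) - (-(K ∘L Cop μ)) = 1 + K ∘L Cop μ
    rw [sub_neg_eq_add]
  have hu₂val : (u₂ : H →L[ℂ] H) = 1 + K ∘L Dop μ := by
    rw [hu₂def]
    show (1 : H →L[ℂ] H) - (-(K ∘L Dop μ)) = 1 + K ∘L Dop μ
    rw [sub_neg_eq_add]
  -- surjectivity of T + R - iμ
  have hsurjm : ∀ x : H, ∃ ψ : (T + R).domain, (T + R) ψ - (Complex.I * μ) • (ψ : H) = x := by
    intro x
    set y : H := ((↑u₁⁻¹ : H →L[ℂ] H)) x with hy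
    have hyx : y + K (Cop μ y) = x := by
      have h := congrArg (fun f : H →L[ℂ] H => f x) u₁.val_inv
      simp only [ContinuousLinearMap.mul_apply, ContinuousLinearMap.one_apply] at h
      rw [hu₁val] at h
      simp only [ContinuousLinearMap.add_apply, ContinuousLinearMap.one_apply,
        ContinuousLinearMap.comp_apply] at h
      exact h
    have hmemT : B μ y ∈ T.domain := hBmem μ hμ0 y
    refine ⟨⟨B μ y, Submodule.mem_inf.mpr ⟨hmemT, hdom hmemT⟩⟩, ?_⟩
    have happ : (T + R) ⟨B μ y, Submodule.mem_inf.mpr ⟨hmemT, hdom hmemT⟩⟩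
        = T ⟨B μ y, hmemT⟩ + R ⟨B μ y, hdom hmemT⟩ := rfl
    rw [happ, hBright' μ hμ0 y, hF3 μ hμ0 y (hdom hmemT)]
    show (y + (Complex.I * μ) • B μ y + K (Cop μ y)) - (Complex.I * μ) • B μ y = x
    rw [← hyx]
    module
  -- surjectivity of T + R + iμ
  have hsurjp : ∀ x : H, ∃ ψ : (T + R).domain, (T + R) ψ + (Complex.I * μ) • (ψ : H) = x := by
    intro x
    set y : H := ((↑u₂⁻¹ : H →L[ℂ] H)) x with hy
    have hyx : y + K (Dop μ y) = x := by
      have h := congrArg (fun f : H →L[ℂ] H => f x) u₂.val_inv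
      simp only [ContinuousLinearMap.mul_apply, ContinuousLinearMap.one_apply] at h
      rw [hu₂val] at h
      simp only [ContinuousLinearMap.add_apply, ContinuousLinearMap.one_apply,
        ContinuousLinearMap.comp_apply] at h
      exact h
    have hmemT : Bs μ y ∈ T.domain := hBsmem μ hμ0 y
    refine ⟨⟨Bs μ y, Submodule.mem_inf.mpr ⟨hmemT, hdom hmemT⟩⟩, ?_⟩
    have happ : (T + R) ⟨Bs μ y, Submodule.mem_inf.mpr ⟨hmemT, hdom hmemT⟩⟩
        = T ⟨Bs μ y, hmemT⟩ + R ⟨Bs μ y, hdom hmemT⟩ := rfl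
    rw [happ, hBsval μ hμ0 y, hF4 μ hμ0 y (hdom hmemT)]
    show (y - (Complex.I * μ) • Bs μ y + K (Dop μ y)) + (Complex.I * μ) • Bs μ y = x
    rw [← hyx]
    module
  -- symmetry of T + R
  have hSsymm : ∀ ψ φ : (T + R).domain, ⟪(T + R) ψ, (φ : H)⟫_ℂ = ⟪(ψ : H), (T + R) φ⟫_ℂ := by
    intro ψ φ
    have happψ : (T + R) ψ = T ⟨(ψ : H), ψ.prop.1⟩ + R ⟨(ψ : H), ψ.prop.2⟩ := rfl
    have happφ : (T + R) φ = T ⟨(φ : H), φ.prop.1⟩ + R ⟨(φ : H), φ.prop.2⟩ := rfl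
    rw [happψ, happφ, inner_add_left, inner_add_right,
      hTsymm ⟨(ψ : H), ψ.prop.1⟩ ⟨(φ : H), φ.prop.1⟩,
      hRsymm ⟨(ψ : H), ψ.prop.2⟩ ⟨(φ : H), φ.prop.2⟩]
  have hdenseS : Dense (((T + R).domain : Submodule ℂ H) : Set H) := by
    have h : (T + R).domain = T.domain := by
      rw [LinearPMap.add_domain]
      exact inf_eq_left.mpr hdom
    rw [h]
    exact hdense
  exact aux_crit (T + R) hdenseS hSsymm μ hμ0 hsurjm hsurjp
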